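/- arXiv:1611.02356 — 2 statements merged into one kernel-verified Lean document; each statement's English description precedes it below -/
import Mathlib

section
/- For every r > 0, the inequality 1 − (1/r)·(I₁(r)/I₀(r)) − (I₁(r)/I₀(r))² > 0 holds, where I₀(r) = (1/π)∫₀^π e^{r cos θ} dθ and I₁(r) = (1/π)∫₀^π e^{r cos θ} cos θ dθ. -/
open MeasureTheory Real Filter

/-- Modified Bessel function of the first kind, order 0. -/
noncomputable def besselI0 (r : ℝ) : ℝ :=
  (1 / Real.pi) * ∫ θ in (0 : ℝ)..Real.pi, Real.exp (r * Real.cos θ)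

/-- Modified Bessel function of the first kind, order 1. -/
noncomputable def besselI1 (r : ℝ) : ℝ :=
  (1 / Real.pi) * ∫ θ in (0 : ℝ)..Real.pi, Real.exp (r * Real.cos θ) * Real.cos θ


theorem variance_positivity (r : ℝ) (hr : 0 < r) :
    0 < 1 - (1 / r) * (besselI1 r / besselI0 r) - (besselI1 r / besselI0 r) ^ 2 := by
  have hπ : (0:ℝ) < Real.pi := Real.pi_pos
  set A := ∫ θ in (0:ℝ)..Real.pi, Real.exp (r * Real.cos θ) with hAdef
  set B := ∫ θ in (0:ℝ)..Real.pi, Real.exp (r * Real.cos θ) * Real.cos θ with hBdef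
  -- integrability facts
  have hiE : IntervalIntegrable (fun θ : ℝ => Real.exp (r * Real.cos θ)) volume 0 Real.pi :=
    (Real.continuous_exp.comp (continuous_const.mul Real.continuous_cos)).intervalIntegrable _ _
  have hiEC : IntervalIntegrable (fun θ : ℝ => Real.exp (r * Real.cos θ) * Real.cos θ)
      volume 0 Real.pi :=
    ((Real.continuous_exp.comp (continuous_const.mul Real.continuous_cos)).mul
      Real.continuous_cos).intervalIntegrable _ _
  have hiEC2 : IntervalIntegrable (fun θ : ℝ => Real.exp (r * Real.cos θ) * (Real.cos θ)^2)
      volume 0 Real.pi :=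
    ((Real.continuous_exp.comp (continuous_const.mul Real.continuous_cos)).mul
      (Real.continuous_cos.pow 2)).intervalIntegrable _ _
  -- A > 0
  have hApos : 0 < A := by
    rw [hAdef]
    apply intervalIntegral.intervalIntegral_pos_of_pos hiE _ hπ
    intro x
    positivity
  -- ratio simplification
  have hratio : besselI1 r / besselI0 r = B / A := by
    unfold besselI1 besselI0
    rw [← hAdef, ← hBdef, mul_div_mul_left]
    positivity
  set m := B / A with hmdef
  -- integration by parts identity
  have hFTC : (∫ θ in (0:ℝ)..Real.pi,
      (Real.exp (r * Real.cos θ) * Real.cos θ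
        - r * (Real.exp (r * Real.cos θ) * (1 - (Real.cos θ)^2))))
      = Real.sin Real.pi * Real.exp (r * Real.cos Real.pi)
        - Real.sin 0 * Real.exp (r * Real.cos 0) := by
    refine intervalIntegral.integral_eq_sub_of_hasDerivAt
      (f := fun θ : ℝ => Real.sin θ * Real.exp (r * Real.cos θ)) ?_ ?_
    · intro x hx
      have h1 : HasDerivAt Real.sin (Real.cos x) x := Real.hasDerivAt_sin x
      have h2 : HasDerivAt (fun θ : ℝ => Real.exp (r * Real.cos θ))
          (Real.exp (r * Real.cos x) * (r * (-Real.sin x))) x :=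
        ((Real.hasDerivAt_cos x).const_mul r).exp
      have := h1.mul h2
      convert this using 1
      · rfl
      · rfl
      have hs : (Real.sin x)^2 = 1 - (Real.cos x)^2 := by
        have := Real.sin_sq_add_cos_sq x; linarith
      linear_combination (r * Real.exp (r * Real.cos x)) * hs
    · apply Continuous.intervalIntegrable
      continuity
  have hC : (∫ θ in (0:ℝ)..Real.pi, Real.exp (r * Real.cos θ) * (Real.cos θ)^2)
      = A - B / r := by
    set C := ∫ θ in (0:ℝ)..Real.pi, Real.exp (r * Real.cos θ) * (Real.cos θ)^2 with hCdef
    have hsplit : (∫ θ in (0:ℝ)..Real.pi,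
        (Real.exp (r * Real.cos θ) * Real.cos θ
          - r * (Real.exp (r * Real.cos θ) * (1 - (Real.cos θ)^2))))
        = B - r * (A - C) := by
      rw [intervalIntegral.integral_sub hiEC]
      · congr 1
        rw [intervalIntegral.integral_const_mul]
        congr 1
        have : (fun θ : ℝ => Real.exp (r * Real.cos θ) * (1 - (Real.cos θ)^2))
            = fun θ : ℝ => Real.exp (r * Real.cos θ)
              - Real.exp (r * Real.cos θ) * (Real.cos θ)^2 := by
          funext θ; ring
        rw [this, intervalIntegral.integral_sub hiE hiEC2]
      · apply IntervalIntegrable.const_mul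
        have : (fun θ : ℝ => Real.exp (r * Real.cos θ) * (1 - (Real.cos θ)^2))
            = fun θ : ℝ => Real.exp (r * Real.cos θ)
              - Real.exp (r * Real.cos θ) * (Real.cos θ)^2 := by
          funext θ; ring
        rw [this]; exact hiE.sub hiEC2
    rw [hsplit] at hFTC
    simp [Real.sin_pi] at hFTC
    have : B = r * (A - C) := by linarith
    field_simp
    linarith [this]
  -- the variance integral
  set g : ℝ → ℝ := fun θ => Real.exp (r * Real.cos θ) * (Real.cos θ - m)^2 with hgdef
  set V := ∫ θ in (0:ℝ)..Real.pi, g θ with hVdef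
  have hVeq : V = (A - B / r) - 2 * m * B + m^2 * A := by
    rw [hVdef]
    have : (fun θ : ℝ => g θ)
        = fun θ : ℝ => Real.exp (r * Real.cos θ) * (Real.cos θ)^2
          - 2 * m * (Real.exp (r * Real.cos θ) * Real.cos θ)
          + m^2 * Real.exp (r * Real.cos θ) := by
      funext θ; rw [hgdef]; ring
    rw [this, intervalIntegral.integral_add ((hiEC2.sub (hiEC.const_mul _)))
      (hiE.const_mul _), intervalIntegral.integral_sub hiEC2 (hiEC.const_mul _),
      intervalIntegral.integral_const_mul, intervalIntegral.integral_const_mul, hC]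
  -- V > 0
  have hgcont : Continuous g := by
    rw [hgdef]; continuity
  have hVpos : 0 < V := by
    rw [hVdef, intervalIntegral.integral_of_le hπ.le]
    rw [MeasureTheory.setIntegral_pos_iff_support_of_nonneg_ae]
    · -- measure of support is positive
      have hsub : Set.Ioc (0:ℝ) Real.pi \ {Real.arccos m}
          ⊆ Function.support g ∩ Set.Ioc 0 Real.pi := by
        rintro θ ⟨hθ, hne⟩
        refine ⟨?_, hθ⟩
        simp only [Function.mem_support, hgdef]
        intro h0
        have hexp : Real.exp (r * Real.cos θ) ≠ 0 := Real.exp_ne_zero _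
        have : (Real.cos θ - m)^2 = 0 := by
          rcases mul_eq_zero.1 h0 with h | h
          · exact absurd h hexp
          · exact h
        have hcm : Real.cos θ = m := by nlinarith [this]
        have : Real.arccos m = θ := by
          rw [← hcm, Real.arccos_cos hθ.1.le hθ.2]
        exact hne (by simp [← this])
      have h1 : volume (Set.Ioc (0:ℝ) Real.pi \ {Real.arccos m})
          = volume (Set.Ioc (0:ℝ) Real.pi) :=
        measure_diff_null (measure_singleton _)
      have h2 : (0:ENNReal) < volume (Set.Ioc (0:ℝ) Real.pi) := by
        rw [Real.volume_Ioc]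
        simp [ENNReal.ofReal_pos, hπ]
      calc (0:ENNReal) < volume (Set.Ioc (0:ℝ) Real.pi) := h2
        _ = volume (Set.Ioc (0:ℝ) Real.pi \ {Real.arccos m}) := h1.symm
        _ ≤ volume (Function.support g ∩ Set.Ioc 0 Real.pi) := measure_mono hsub
    · filter_upwards with θ
      rw [hgdef]
      positivity
    · exact (hgcont.intervalIntegrable 0 Real.pi).1
  -- conclude
  rw [hratio]
  have hAne : A ≠ 0 := ne_of_gt hApos
  have hrne : r ≠ 0 := ne_of_gt hr
  clear_value A B V
  have hkey : 1 - (1 / r) * m - m^2 = V / A := by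
    rw [hVeq, hmdef]
    field_simp
    ring
  rw [hkey]
  exact div_pos hVpos hApos
end

section
/- The function g₃(r) = r/(coth(r) − 1/r) defined for r > 0 satisfies lim_{r→0⁺} g₃(r) = 3, and g₃ is strictly increasing on (0,∞) with lim_{r→∞} g₃(r) = ∞; consequently for every β > 3 there exists a unique r > 0 with g₃(r) = β. -/
open Real Filter Set

/-- The function `g₃(r) = r / (coth r − 1/r)` determining the supercritical
minimizer of the mean-field Heisenberg model. -/
noncomputable def gThree (r : ℝ) : ℝ := r / (Real.cosh r / Real.sinh r - 1 / r)

private lemma pos_of_hasDerivAt {f f' : ℝ → ℝ} (hd : ∀ x, HasDerivAt f (f' x) x)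
    (hp : ∀ x, 0 < x → 0 < f' x) (h0 : f 0 = 0) {x : ℝ} (hx : 0 < x) : 0 < f x := by
  have hmono : StrictMonoOn f (Set.Ici 0) := by
    apply strictMonoOn_of_deriv_pos (convex_Ici 0)
    · exact fun y _ => (hd y).continuousAt.continuousWithinAt
    · intro y hy
      rw [interior_Ici] at hy
      rw [(hd y).deriv]
      exact hp y hy
  have := hmono Set.self_mem_Ici (Set.mem_Ici.mpr hx.le) hx
  rwa [h0] at this

private lemma D_pos {r : ℝ} (hr : 0 < r) : 0 < r * Real.cosh r - Real.sinh r := by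
  refine pos_of_hasDerivAt (f := fun x => x * Real.cosh x - Real.sinh x)
    (f' := fun x => x * Real.sinh x) (fun x => ?_) ?_ (by simp) hr
  · have h := ((hasDerivAt_id' x).mul (Real.hasDerivAt_cosh x)).sub (Real.hasDerivAt_sinh x)
    exact h.congr_deriv (by ring)
  · intro x hx
    exact mul_pos hx (Real.sinh_pos_iff.mpr hx)

private lemma phi2_pos {s : ℝ} (hs : 0 < s) :
    0 < (s * Real.sinh s - 2 * Real.cosh s) / 4 + 1 / 2 := by
  refine pos_of_hasDerivAt
    (f := fun x => (x * Real.sinh x - 2 * Real.cosh x) / 4 + 1 / 2)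
    (f' := fun x => (x * Real.cosh x - Real.sinh x) / 4) (fun x => ?_) ?_ (by norm_num) hs
  · have h := ((((hasDerivAt_id' x).mul (Real.hasDerivAt_sinh x)).sub
      ((hasDerivAt_const x (2:ℝ)).mul (Real.hasDerivAt_cosh x))).div_const 4).add_const (1/2)
    exact h.congr_deriv (by ring)
  · intro x hx
    have := D_pos hx
    linarith

private lemma phi1_pos {s : ℝ} (hs : 0 < s) :
    0 < (Real.sinh s + s * Real.cosh s) / 4 - Real.sinh s + s / 2 := by
  refine pos_of_hasDerivAt
    (f := fun x => (Real.sinh x + x * Real.cosh x) / 4 - Real.sinh x + x / 2)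
    (f' := fun x => (x * Real.sinh x - 2 * Real.cosh x) / 4 + 1 / 2) (fun x => ?_) ?_
    (by simp) hs
  · have h := ((((Real.hasDerivAt_sinh x).add
      ((hasDerivAt_id' x).mul (Real.hasDerivAt_cosh x))).div_const 4).sub
      (Real.hasDerivAt_sinh x)).add ((hasDerivAt_id' x).div_const 2)
    exact h.congr_deriv (by ring)
  · exact fun x hx => phi2_pos hx

private lemma phi_pos {s : ℝ} (hs : 0 < s) :
    0 < s * Real.sinh s / 4 - Real.cosh s + 1 + s ^ 2 / 4 := by
  refine pos_of_hasDerivAt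
    (f := fun x => x * Real.sinh x / 4 - Real.cosh x + 1 + x ^ 2 / 4)
    (f' := fun x => (Real.sinh x + x * Real.cosh x) / 4 - Real.sinh x + x / 2)
    (fun x => ?_) ?_ (by simp) hs
  · have h := (((((hasDerivAt_id' x).mul (Real.hasDerivAt_sinh x)).div_const 4).sub
      (Real.hasDerivAt_cosh x)).add_const 1).add ((hasDerivAt_pow 2 x).div_const 4)
    exact h.congr_deriv (by push_cast; ring)
  · exact fun x hx => phi1_pos hx

private lemma D_lt {r : ℝ} (hr : 0 < r) :
    r * Real.cosh r - Real.sinh r < r ^ 3 / 3 * Real.cosh r := by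
  have h : 0 < r ^ 3 / 3 * Real.cosh r - (r * Real.cosh r - Real.sinh r) := by
    refine pos_of_hasDerivAt
      (f := fun x => x ^ 3 / 3 * Real.cosh x - (x * Real.cosh x - Real.sinh x))
      (f' := fun x => x ^ 2 * Real.cosh x + x ^ 3 * Real.sinh x / 3 - x * Real.sinh x)
      (fun x => ?_) ?_ (by simp) hr
    · have h := ((((hasDerivAt_pow 3 x).div_const 3).mul (Real.hasDerivAt_cosh x)).sub
        (((hasDerivAt_id' x).mul (Real.hasDerivAt_cosh x)).sub (Real.hasDerivAt_sinh x)))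
      exact h.congr_deriv (by push_cast; ring)
    · intro x hx
      have h1 := D_pos hx
      have h2 : 0 < Real.sinh x := Real.sinh_pos_iff.mpr hx
      nlinarith [mul_pos hx h1, mul_pos (mul_pos (mul_pos hx hx) hx) h2]
  linarith

private lemma D_gt {r : ℝ} (hr : 0 < r) : r ^ 3 / 3 < r * Real.cosh r - Real.sinh r := by
  have h : 0 < r * Real.cosh r - Real.sinh r - r ^ 3 / 3 := by
    refine pos_of_hasDerivAt
      (f := fun x => x * Real.cosh x - Real.sinh x - x ^ 3 / 3)
      (f' := fun x => x * (Real.sinh x - x)) (fun x => ?_) ?_ (by simp) hr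
    · have h := (((hasDerivAt_id' x).mul (Real.hasDerivAt_cosh x)).sub
        (Real.hasDerivAt_sinh x)).sub ((hasDerivAt_pow 3 x).div_const 3)
      exact h.congr_deriv (by push_cast; ring)
    · intro x hx
      exact mul_pos hx (by linarith [Real.self_lt_sinh_iff.mpr hx])
  linarith

private lemma gThree_eq {r : ℝ} (hr : 0 < r) :
    gThree r = r ^ 2 * Real.sinh r / (r * Real.cosh r - Real.sinh r) := by
  have hs : Real.sinh r ≠ 0 := (Real.sinh_pos_iff.mpr hr).ne'
  have hD : r * Real.cosh r - Real.sinh r ≠ 0 := (D_pos hr).ne'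
  have hr' : r ≠ 0 := hr.ne'
  have hden : Real.cosh r / Real.sinh r - 1 / r
      = (r * Real.cosh r - Real.sinh r) / (r * Real.sinh r) := by
    field_simp
  rw [gThree, hden]
  field_simp

private lemma F_strictMono :
    StrictMonoOn (fun r => r ^ 2 * Real.sinh r / (r * Real.cosh r - Real.sinh r))
      (Set.Ioi (0 : ℝ)) := by
  apply strictMonoOn_of_deriv_pos (convex_Ioi 0)
  · apply ContinuousOn.div
    · exact (continuous_pow 2).continuousOn.mul Real.continuous_sinh.continuousOn
    · exact ((continuous_id.mul Real.continuous_cosh).sub Real.continuous_sinh).continuousOn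
    · exact fun x hx => (D_pos hx).ne'
  · intro r hr
    rw [interior_Ioi] at hr
    have hr' : (0 : ℝ) < r := hr
    have hD := D_pos hr'
    have hN : HasDerivAt (fun x => x ^ 2 * Real.sinh x)
        (2 * r * Real.sinh r + r ^ 2 * Real.cosh r) r := by
      have h := (hasDerivAt_pow 2 r).mul (Real.hasDerivAt_sinh r)
      exact h.congr_deriv (by push_cast; ring)
    have hDd : HasDerivAt (fun x => x * Real.cosh x - Real.sinh x) (r * Real.sinh r) r := by
      have h := ((hasDerivAt_id' r).mul (Real.hasDerivAt_cosh r)).sub (Real.hasDerivAt_sinh r)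
      exact h.congr_deriv (by ring)
    have hF := hN.div hDd hD.ne'
    rw [show deriv (fun r => r ^ 2 * Real.sinh r / (r * Real.cosh r - Real.sinh r)) r = _ from hF.deriv]
    apply div_pos
    · have hnum : (2 * r * Real.sinh r + r ^ 2 * Real.cosh r) *
          (r * Real.cosh r - Real.sinh r) - r ^ 2 * Real.sinh r * (r * Real.sinh r)
          = r * ((2 * r) * Real.sinh (2 * r) / 4 - Real.cosh (2 * r) + 1 + (2 * r) ^ 2 / 4) := by
        rw [Real.sinh_two_mul, Real.cosh_two_mul]
        linear_combination (r ^ 3 + r) * Real.cosh_sq r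
      rw [hnum]
      exact mul_pos hr' (phi_pos (by linarith))
    · positivity

private lemma gThree_strictMono : StrictMonoOn gThree (Set.Ioi (0 : ℝ)) := by
  intro a ha b hb hab
  rw [gThree_eq ha, gThree_eq hb]
  exact F_strictMono ha hb hab

private lemma gThree_tendsto_zero :
    Tendsto gThree (nhdsWithin 0 (Set.Ioi 0)) (nhds 3) := by
  have hslope : Tendsto (fun r : ℝ => Real.sinh r / r) (nhdsWithin 0 (Set.Ioi 0)) (nhds 1) := by
    have h := (Real.hasDerivAt_sinh 0)
    rw [hasDerivAt_iff_tendsto_slope] at h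
    have h2 : Tendsto (slope Real.sinh 0) (nhdsWithin 0 (Set.Ioi 0)) (nhds (Real.cosh 0)) :=
      h.mono_left (nhdsWithin_mono 0 (fun x hx => ne_of_gt hx))
    rw [Real.cosh_zero] at h2
    refine h2.congr fun r => ?_
    simp [slope_def_field]
  have hcosh : Tendsto Real.cosh (nhdsWithin 0 (Set.Ioi 0)) (nhds 1) := by
    have : Tendsto Real.cosh (nhds 0) (nhds 1) := by
      simpa using Real.continuous_cosh.tendsto 0
    exact this.mono_left nhdsWithin_le_nhds
  have hlow : Tendsto (fun r : ℝ => 3 * (Real.sinh r / r) / Real.cosh r)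
      (nhdsWithin 0 (Set.Ioi 0)) (nhds 3) := by
    have := ((tendsto_const_nhds (x := (3:ℝ))).mul hslope).div hcosh one_ne_zero
    simpa [Pi.div_def] using this
  have hhigh : Tendsto (fun r : ℝ => 3 * (Real.sinh r / r))
      (nhdsWithin 0 (Set.Ioi 0)) (nhds 3) := by
    have := (tendsto_const_nhds (x := (3:ℝ))).mul hslope
    simpa using this
  refine tendsto_of_tendsto_of_tendsto_of_le_of_le' hlow hhigh ?_ ?_
  · filter_upwards [eventually_mem_nhdsWithin] with r hr
    have hr' : (0 : ℝ) < r := hr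
    have hs : 0 < Real.sinh r := Real.sinh_pos_iff.mpr hr'
    have hc : 0 < Real.cosh r := Real.cosh_pos r
    have hD := D_pos hr'
    have hub := D_lt hr'
    have h1 : 3 * (Real.sinh r / r) / Real.cosh r = 3 * Real.sinh r / (r * Real.cosh r) := by
      field_simp
    rw [gThree_eq hr', h1, div_le_div_iff₀ (by positivity) hD]
    nlinarith [mul_lt_mul_of_pos_left hub (show (0:ℝ) < 3 * Real.sinh r by positivity)]
  · filter_upwards [eventually_mem_nhdsWithin] with r hr
    have hr' : (0 : ℝ) < r := hr
    have hs : 0 < Real.sinh r := Real.sinh_pos_iff.mpr hr'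
    have hD := D_pos hr'
    have hlb := D_gt hr'
    have h2 : 3 * (Real.sinh r / r) = 3 * Real.sinh r / r := by ring
    rw [gThree_eq hr', h2, div_le_div_iff₀ hD hr']
    nlinarith [mul_lt_mul_of_pos_left hlb (show (0:ℝ) < 3 * Real.sinh r by positivity)]

private lemma gThree_tendsto_atTop : Tendsto gThree atTop atTop := by
  have h2r : Tendsto (fun r : ℝ => 2 * r) atTop atTop :=
    Tendsto.const_mul_atTop two_pos tendsto_id
  have hexp : Tendsto (fun r : ℝ => Real.exp (-(2 * r))) atTop (nhds 0) :=
    Real.tendsto_exp_atBot.comp (tendsto_neg_atTop_atBot.comp h2r)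
  have hfrac : Tendsto (fun r : ℝ => (1 + Real.exp (-(2 * r))) / (1 - Real.exp (-(2 * r))))
      atTop (nhds 1) := by
    have := (((tendsto_const_nhds (x := (1:ℝ))).add hexp).div
      ((tendsto_const_nhds (x := (1:ℝ))).sub hexp) (by norm_num))
    simpa [Pi.div_def] using this
  have heq : ∀ᶠ r : ℝ in atTop, (1 + Real.exp (-(2 * r))) / (1 - Real.exp (-(2 * r)))
      = Real.cosh r / Real.sinh r := by
    filter_upwards [eventually_gt_atTop (0 : ℝ)] with r hr
    have hx : Real.exp r ≠ 0 := Real.exp_ne_zero r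
    have hx1 : 1 < Real.exp r := by
      have := Real.exp_lt_exp.mpr hr
      simpa using this
    have hinvpos : 0 < (Real.exp r)⁻¹ := by positivity
    have h5 : (Real.exp r)⁻¹ * Real.exp r = 1 := inv_mul_cancel₀ hx
    have hinvlt : (Real.exp r)⁻¹ < 1 := by nlinarith
    rw [Real.cosh_eq, Real.sinh_eq, show -(2 * r) = -r + -r by ring, Real.exp_add,
      Real.exp_neg]
    have hA : 1 - (Real.exp r)⁻¹ * (Real.exp r)⁻¹ ≠ 0 := by nlinarith
    have hB : Real.exp r - (Real.exp r)⁻¹ ≠ 0 := by nlinarith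
    rw [div_eq_div_iff hA (div_ne_zero hB two_ne_zero)]
    linear_combination (Real.exp r)⁻¹ * h5
  have hcs : Tendsto (fun r : ℝ => Real.cosh r / Real.sinh r) atTop (nhds 1) :=
    hfrac.congr' heq
  have hinv : Tendsto (fun r : ℝ => 1 / r) atTop (nhds (0 : ℝ)) := by
    simpa [one_div] using (tendsto_inv_atTop_zero : Tendsto (fun x : ℝ => x⁻¹) atTop (nhds 0))
  have hden : Tendsto (fun r : ℝ => Real.cosh r / Real.sinh r - 1 / r) atTop (nhds 1) := by
    have := hcs.sub hinv
    simpa using this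
  have : Tendsto (fun r : ℝ => r * (Real.cosh r / Real.sinh r - 1 / r)⁻¹) atTop atTop := by
    apply Filter.Tendsto.atTop_mul_pos (C := 1) one_pos tendsto_id
    simpa using hden.inv₀ one_ne_zero
  exact this.congr fun r => (div_eq_mul_inv _ _).symm

theorem gThree_properties :
    Tendsto gThree (nhdsWithin 0 (Set.Ioi 0)) (nhds 3) ∧
      StrictMonoOn gThree (Set.Ioi (0 : ℝ)) ∧
      Tendsto gThree atTop atTop ∧
      ∀ β : ℝ, 3 < β → ∃! r : ℝ, 0 < r ∧ gThree r = β := by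
  refine ⟨gThree_tendsto_zero, gThree_strictMono, gThree_tendsto_atTop, ?_⟩
  intro β hβ
  obtain ⟨a, haβ, ha⟩ := ((gThree_tendsto_zero.eventually_lt_const hβ).and
    eventually_mem_nhdsWithin).exists
  have ha' : (0 : ℝ) < a := ha
  obtain ⟨b, hbβ, hab⟩ := ((gThree_tendsto_atTop.eventually_gt_atTop β).and
    (eventually_ge_atTop (a + 1))).exists
  have haltb : a < b := by linarith
  have hcont : ContinuousOn gThree (Set.Icc a b) := by
    have : ContinuousOn (fun r => r ^ 2 * Real.sinh r / (r * Real.cosh r - Real.sinh r))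
        (Set.Icc a b) := by
      apply ContinuousOn.div
      · exact (continuous_pow 2).continuousOn.mul Real.continuous_sinh.continuousOn
      · exact ((continuous_id.mul Real.continuous_cosh).sub Real.continuous_sinh).continuousOn
      · exact fun x hx => (D_pos (lt_of_lt_of_le ha' hx.1)).ne'
    exact this.congr fun x hx => gThree_eq (lt_of_lt_of_le ha' hx.1)
  have hmem : β ∈ Set.Icc (gThree a) (gThree b) := ⟨haβ.le, hbβ.le⟩
  obtain ⟨r, hr, hrβ⟩ := intermediate_value_Icc haltb.le hcont hmem
  have hr0 : 0 < r := lt_of_lt_of_le ha' hr.1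
  refine ⟨r, ⟨hr0, hrβ⟩, ?_⟩
  rintro y ⟨hy0, hyβ⟩
  exact gThree_strictMono.injOn hy0 hr0 (by rw [hyβ, hrβ])
end
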